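/- Let k be an algebraically closed field of characteristic zero, let n be an odd positive integer, and let b_11, b_22, b_12 ∈ kˣ be roots of unity such that b_12² = b_11^{−1} and b_12² = b_22^{−n}. Then there exists q ∈ kˣ such that b_22 = q², b_11 = q^{2n} and b_12 = q^{−n}. -/

import Mathlib

/-- Lemma 4.8: a rank-2 braiding of Cartan type with a₁₂ = −1 and a₂₁ = −n,
n odd, is of FL-type. -/
theorem rank_two_a12_eq_neg_one_is_FL_type {k : Type*} [Field k] [IsAlgClosed k] [CharZero k]
    (n : ℕ) (hn : Odd n) (hpos : 0 < n)
    (b11 b22 b12 : kˣ)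
    (h1 : IsOfFinOrder b11) (h2 : IsOfFinOrder b22) (h3 : IsOfFinOrder b12)
    (hc1 : b12 ^ 2 = b11 ^ (-1 : ℤ))
    (hc2 : b12 ^ 2 = b22 ^ (-(n : ℤ))) :
    ∃ q : kˣ, b22 = q ^ 2 ∧ b11 = q ^ (2 * n) ∧ b12 = q ^ (-(n : ℤ)) := by
  obtain ⟨z, hz⟩ := IsAlgClosed.exists_pow_nat_eq (b22 : k) (n := 2) (by norm_num)
  have hz0 : z ≠ 0 := by
    intro h
    rw [h] at hz
    simp at hz
    exact b22.ne_zero hz.symm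
  set q0 : kˣ := Units.mk0 z hz0 with hq0def
  have hq0 : q0 ^ 2 = b22 := Units.ext (by simpa [hq0def] using hz)
  have hb11 : b11 = (b12 ^ 2)⁻¹ := by
    rw [hc1]; simp [zpow_neg, zpow_one]
  have key : ∀ u : kˣ, u ^ 2 = b22 → b12 = (u ^ n)⁻¹ →
      b22 = u ^ 2 ∧ b11 = u ^ (2 * n) ∧ b12 = u ^ (-(n : ℤ)) := by
    intro u hu hb
    refine ⟨hu.symm, ?_, ?_⟩
    · rw [hb11, hb, inv_pow, inv_inv, ← pow_mul, Nat.mul_comm]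
    · rw [hb, zpow_neg, zpow_natCast]
  have ht2 : (b12 * q0 ^ n) ^ 2 = 1 := by
    have h' : b12 ^ 2 * (q0 ^ 2) ^ n = 1 := by
      rw [hq0, hc2, ← zpow_natCast b22 n, ← zpow_add b22]
      simp
    rw [mul_pow, ← pow_mul, Nat.mul_comm, pow_mul, h']
  have hcase : b12 * q0 ^ n = 1 ∨ b12 * q0 ^ n = -1 := by
    have h' : ((b12 * q0 ^ n : kˣ) : k) * ((b12 * q0 ^ n : kˣ) : k) = 1 := by
      have h0 := congrArg Units.val ht2
      rw [Units.val_pow_eq_pow_val, Units.val_one, sq] at h0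
      exact h0
    rcases mul_self_eq_one_iff.mp h' with h | h
    · left; exact Units.ext h
    · right; exact Units.ext (by simpa using h)
  rcases hcase with h | h
  · exact ⟨q0, key q0 hq0 (eq_inv_iff_mul_eq_one.mpr h)⟩
  · refine ⟨-q0, key (-q0) (by rw [neg_sq, hq0]) ?_⟩
    rw [hn.neg_pow]
    have hb : b12 = -1 * (q0 ^ n)⁻¹ := eq_mul_inv_of_mul_eq h
    rw [hb, inv_neg, neg_one_mul]
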